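/- Let A be a real n×n matrix of rank k < n. Then the set of matrices in O(n,ℝ) that realize the Frobenius distance from A to O(n,ℝ), namely {B ∈ O(n,ℝ) : ‖A − B‖ = d(A, O(n,ℝ))}, is homeomorphic to the orthogonal group O(n−k,ℝ). Concretely, if A = UDVᵀ is a singular value decomposition with the diagonal entries of D in decreasing order, this set equals U·(I_k ⊕ O(n−k,ℝ))·Vᵀ, i.e. the set of matrices U·blockdiag(I_k, C)·Vᵀ with C ∈ O(n−k,ℝ). -/

import Mathlib

open Matrix

namespace MinSetAux

variable {n : ℕ}

lemma trace_tmul (X : Matrix (Fin n) (Fin n) ℝ) :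
    Matrix.trace (Xᵀ * X) = ∑ j, ∑ i, (X i j)^2 := by
  simp [Matrix.trace, Matrix.mul_apply, Matrix.diag, sq]

lemma trace_tmul_nonneg (X : Matrix (Fin n) (Fin n) ℝ) :
    0 ≤ Matrix.trace (Xᵀ * X) := by
  rw [trace_tmul]; positivity

lemma trace_conj (Uu Vv M : Matrix (Fin n) (Fin n) ℝ) (hU : Uuᵀ * Uu = 1) (hV : Vvᵀ * Vv = 1) :
    Matrix.trace ((Uu * M * Vvᵀ)ᵀ * (Uu * M * Vvᵀ)) = Matrix.trace (Mᵀ * M) := by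
  have : (Uu * M * Vvᵀ)ᵀ * (Uu * M * Vvᵀ) = Vv * (Mᵀ * M) * Vvᵀ := by
    simp only [Matrix.transpose_mul, Matrix.transpose_transpose]
    have e1 : Vv * (Mᵀ * Uuᵀ) * (Uu * M * Vvᵀ) = Vv * Mᵀ * (Uuᵀ * Uu) * M * Vvᵀ := by
      noncomm_ring
    rw [e1, hU]
    noncomm_ring
  rw [this, Matrix.trace_mul_cycle, ← Matrix.mul_assoc, hV, Matrix.one_mul]

lemma diag_entry_le_one (W : Matrix (Fin n) (Fin n) ℝ) (hW : Wᵀ * W = 1) (j : Fin n) :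
    W j j ≤ 1 := by
  have h1 : ∑ i, (W i j)^2 = 1 := by
    have := congrArg (fun M => M j j) hW
    simpa [Matrix.mul_apply, Matrix.one_apply, sq] using this
  have h2 : (W j j)^2 ≤ 1 := by
    rw [← h1]
    exact Finset.single_le_sum (f := fun i => (W i j)^2) (fun i _ => sq_nonneg _) (Finset.mem_univ j)
  nlinarith [sq_nonneg (W j j - 1), sq_nonneg (W j j + 1)]


lemma trace_diag_mul (d : Fin n → ℝ) (W : Matrix (Fin n) (Fin n) ℝ) :
    Matrix.trace (diagonal d * W) = ∑ i, d i * W i i := by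
  simp [Matrix.trace, Matrix.diag, Matrix.diagonal_mul]

lemma trace_sub_expand (d : Fin n → ℝ) (W : Matrix (Fin n) (Fin n) ℝ) (hW : Wᵀ * W = 1) :
    Matrix.trace (((diagonal d) - W)ᵀ * ((diagonal d) - W)) =
      Matrix.trace (((diagonal d) - 1)ᵀ * ((diagonal d) - 1)) + 2 * ∑ i, d i * (1 - W i i) := by
  have expand : ∀ B : Matrix (Fin n) (Fin n) ℝ,
      Matrix.trace (((diagonal d) - B)ᵀ * ((diagonal d) - B))
        = Matrix.trace ((diagonal d)ᵀ * (diagonal d)) - 2 * Matrix.trace (diagonal d * B)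
            + Matrix.trace (Bᵀ * B) := by
    intro B
    have h1 : ((diagonal d) - B)ᵀ * ((diagonal d) - B)
        = (diagonal d)ᵀ * (diagonal d) - (diagonal d)ᵀ * B - Bᵀ * (diagonal d) + Bᵀ * B := by
      rw [Matrix.transpose_sub, Matrix.sub_mul, Matrix.mul_sub, Matrix.mul_sub]
      abel
    rw [h1, Matrix.trace_add, Matrix.trace_sub, Matrix.trace_sub]
    have h2 : Matrix.trace ((diagonal d)ᵀ * B) = Matrix.trace (diagonal d * B) := by
      rw [Matrix.diagonal_transpose]
    have h3 : Matrix.trace (Bᵀ * (diagonal d)) = Matrix.trace (diagonal d * B) := by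
      rw [Matrix.trace_mul_comm, Matrix.diagonal_transpose] at h2
      rw [Matrix.trace_mul_comm, ← Matrix.diagonal_transpose d, ← Matrix.transpose_mul,
        Matrix.trace_transpose, Matrix.diagonal_transpose]
      exact Matrix.trace_mul_comm _ _
    rw [h2, h3]; ring
  rw [expand W, expand 1, hW]
  simp only [Matrix.mul_one, Matrix.transpose_one, Matrix.one_mul, Matrix.trace_one,
    Fintype.card_fin, trace_diag_mul, Matrix.trace_diagonal]
  simp only [mul_sub, mul_one]
  rw [Finset.sum_sub_distrib]
  ring

lemma diag_pos_iff {k : ℕ} (d : Fin n → ℝ)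
    (hnn : ∀ i, 0 ≤ d i) (hdec : ∀ i j : Fin n, i ≤ j → d j ≤ d i)
    (hcard : Fintype.card {i // d i ≠ 0} = k) :
    ∀ i : Fin n, (d i ≠ 0 ↔ (i : ℕ) < k) := by
  classical
  have hS : (Finset.univ.filter (fun i => d i ≠ 0)).card = k := by
    rw [← hcard, Fintype.card_subtype]
  intro i
  constructor
  · intro hi
    by_contra hik
    push_neg at hik
    have hsub : Finset.Iic i ⊆ Finset.univ.filter (fun j => d j ≠ 0) := by
      intro j hj
      simp only [Finset.mem_Iic] at hj
      simp only [Finset.mem_filter, Finset.mem_univ, true_and]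
      intro h0
      exact hi (le_antisymm (h0 ▸ hdec j i hj) (hnn i))
    have := Finset.card_le_card hsub
    rw [hS, Fin.card_Iic] at this
    omega
  · intro hik
    by_contra hi
    have hsub : Finset.univ.filter (fun j => d j ≠ 0) ⊆ Finset.Iio i := by
      intro j hj
      simp only [Finset.mem_filter, Finset.mem_univ, true_and] at hj
      simp only [Finset.mem_Iio]
      by_contra hji
      push_neg at hji
      exact hj (le_antisymm (hi ▸ hdec i j hji) (hnn j))
    have := Finset.card_le_card hsub
    rw [hS, Fin.card_Iio] at this
    omega

lemma col_unit_vec (W : Matrix (Fin n) (Fin n) ℝ) (j : Fin n)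
    (h1 : ∑ i, (W i j)^2 = 1) (h2 : W j j = 1) : ∀ i, i ≠ j → W i j = 0 := by
  have hz : ∑ i ∈ Finset.univ.erase j, (W i j)^2 = 0 := by
    have h3 : (W j j)^2 + ∑ i ∈ Finset.univ.erase j, (W i j)^2 = ∑ i, (W i j)^2 :=
      Finset.add_sum_erase Finset.univ (fun i => (W i j)^2) (Finset.mem_univ j)
    rw [h1, h2] at h3
    nlinarith [h3]
  intro i hi
  have := (Finset.sum_eq_zero_iff_of_nonneg (fun i _ => sq_nonneg (W i j))).mp hz i
    (Finset.mem_erase.mpr ⟨hi, Finset.mem_univ i⟩)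
  exact pow_eq_zero_iff (n := 2) (by norm_num) |>.mp this

lemma orth_col_sq (W : Matrix (Fin n) (Fin n) ℝ) (hW : Wᵀ * W = 1) (j : Fin n) :
    ∑ i, (W i j)^2 = 1 := by
  have := congrArg (fun M => M j j) hW
  simpa [Matrix.mul_apply, Matrix.one_apply, sq] using this

lemma orth_fix_block {k : ℕ} (W : Matrix (Fin n) (Fin n) ℝ)
    (hW : Wᵀ * W = 1) (hfix : ∀ i : Fin n, (i:ℕ) < k → W i i = 1) :
    ∀ i j : Fin n, ((i:ℕ) < k ∨ (j:ℕ) < k) → W i j = if i = j then 1 else 0 := by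
  have hW' : W * Wᵀ = 1 := mul_eq_one_comm.mp hW
  have hrow : ∀ i : Fin n, ∑ m, (W i m)^2 = 1 := by
    intro i
    have := orth_col_sq Wᵀ (by rw [Matrix.transpose_transpose]; exact hW') i
    simpa using this
  intro i j hij
  rcases eq_or_ne i j with rfl | hne
  · simp only [if_pos rfl]
    rcases hij with h | h <;> exact hfix i h
  · rw [if_neg hne]
    rcases hij with h | h
    · -- row i is e_i
      exact col_unit_vec Wᵀ i (by simpa using hrow i) (hfix i h) j (Ne.symm hne)
    · -- column j is e_j
      exact col_unit_vec W j (orth_col_sq W hW j) (hfix j h) i hne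

end MinSetAux


open Matrix

/-- The Frobenius norm ‖X‖ = √tr(XᵀX) of a real square matrix. -/
noncomputable def frobNorm {n : ℕ} (X : Matrix (Fin n) (Fin n) ℝ) : ℝ :=
  Real.sqrt (Matrix.trace (Xᵀ * X))

/-- The Frobenius distance from A to the orthogonal group O(n,ℝ). -/
noncomputable def distToOrth {n : ℕ} (A : Matrix (Fin n) (Fin n) ℝ) : ℝ :=
  sInf {x : ℝ | ∃ B : Matrix (Fin n) (Fin n) ℝ, Bᵀ * B = 1 ∧ x = frobNorm (A - B)}

/-- The set of matrices in O(n,ℝ) realizing the Frobenius distance from A to O(n,ℝ). -/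
noncomputable def minimizerSet {n : ℕ} (A : Matrix (Fin n) (Fin n) ℝ) :
    Set (Matrix (Fin n) (Fin n) ℝ) :=
  {B | Bᵀ * B = 1 ∧ frobNorm (A - B) = distToOrth A}

/-- Let A be a real n×n matrix of rank k < n.  Then the set of matrices in O(n,ℝ)
realizing the Frobenius distance from A to O(n,ℝ) is homeomorphic to O(n−k,ℝ).  Concretely, if
A = UDVᵀ is a singular value decomposition with the diagonal entries of D nonnegative and in
decreasing order, this set equals {U · blockdiag(I_k, C) · Vᵀ : C ∈ O(n−k,ℝ)}. -/
theorem minimizer_set_of_singular_matrix {n k : ℕ} (hkn : k < n)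
    (A : Matrix (Fin n) (Fin n) ℝ) (hrank : A.rank = k)
    (U V D : Matrix (Fin n) (Fin n) ℝ) (hU : Uᵀ * U = 1) (hV : Vᵀ * V = 1)
    (hDdiag : ∀ i j : Fin n, i ≠ j → D i j = 0) (hDnn : ∀ i : Fin n, 0 ≤ D i i)
    (hDdec : ∀ i j : Fin n, i ≤ j → D j j ≤ D i i)
    (hSVD : A = U * D * Vᵀ) :
    minimizerSet A =
      {B | ∃ C : Matrix (Fin (n - k)) (Fin (n - k)) ℝ, Cᵀ * C = 1 ∧
        B = U * (Matrix.reindex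
              (finSumFinEquiv.trans (finCongr (Nat.add_sub_cancel' hkn.le)))
              (finSumFinEquiv.trans (finCongr (Nat.add_sub_cancel' hkn.le)))
              (Matrix.fromBlocks (1 : Matrix (Fin k) (Fin k) ℝ) 0 0 C)) * Vᵀ} ∧
    Nonempty ((minimizerSet A) ≃ₜ
      {C : Matrix (Fin (n - k)) (Fin (n - k)) ℝ // Cᵀ * C = 1}) := by
  classical
  set e : Fin k ⊕ Fin (n-k) ≃ Fin n :=
    finSumFinEquiv.trans (finCongr (Nat.add_sub_cancel' hkn.le)) with he
  set d : Fin n → ℝ := fun i => D i i with hd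
  have hDeq : D = Matrix.diagonal d := by
    ext i j
    by_cases h : i = j
    · subst h; simp [Matrix.diagonal_apply_eq, hd]
    · rw [hDdiag i j h, Matrix.diagonal_apply_ne _ h]
  have hUU : U * Uᵀ = 1 := mul_eq_one_comm.mp hU
  have hVV : V * Vᵀ = 1 := mul_eq_one_comm.mp hV
  -- index value facts
  have hvl : ∀ p : Fin k, ((e (Sum.inl p)) : ℕ) = (p : ℕ) := by
    intro p; simp [he, finSumFinEquiv]
  have hvr : ∀ q : Fin (n-k), ((e (Sum.inr q)) : ℕ) = k + (q : ℕ) := by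
    intro q; simp [he, finSumFinEquiv]
  -- rank facts
  have hUdet : IsUnit U.det := by
    have h1 : U.det * U.det = 1 := by
      have := congrArg Matrix.det hU
      rwa [Matrix.det_mul, Matrix.det_transpose, Matrix.det_one] at this
    exact IsUnit.of_mul_eq_one _ h1
  have hVtdet : IsUnit (Vᵀ).det := by
    have h1 : Vᵀ.det * V.det = 1 := by
      have := congrArg Matrix.det hV
      rwa [Matrix.det_mul, Matrix.det_one] at this
    exact IsUnit.of_mul_eq_one _ (by rwa [Matrix.det_transpose] at h1 ⊢)
  have hcard : Fintype.card {i // d i ≠ 0} = k := by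
    have h1 : A.rank = D.rank := by
      rw [hSVD, Matrix.rank_mul_eq_left_of_isUnit_det Vᵀ (U*D) hVtdet,
        Matrix.rank_mul_eq_right_of_isUnit_det U D hUdet]
    rw [hrank, hDeq, Matrix.rank_diagonal] at h1
    omega
  have hdpos : ∀ i : Fin n, (d i ≠ 0 ↔ (i : ℕ) < k) :=
    MinSetAux.diag_pos_iff d hDnn hDdec hcard
  -- the optimal value
  set c₀ : ℝ := Matrix.trace ((Matrix.diagonal d - 1)ᵀ * (Matrix.diagonal d - 1)) with hc₀
  have hc₀nn : 0 ≤ c₀ := MinSetAux.trace_tmul_nonneg _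
  have key : ∀ W : Matrix (Fin n) (Fin n) ℝ, Wᵀ * W = 1 →
      frobNorm (A - U * W * Vᵀ) = Real.sqrt (c₀ + 2 * ∑ i, d i * (1 - W i i)) := by
    intro W hW
    have hsub : A - U * W * Vᵀ = U * (Matrix.diagonal d - W) * Vᵀ := by
      rw [hSVD, hDeq]; noncomm_ring
    rw [frobNorm, hsub, MinSetAux.trace_conj U V _ hU hV,
      MinSetAux.trace_sub_expand d W hW]
  have hterm : ∀ W : Matrix (Fin n) (Fin n) ℝ, Wᵀ * W = 1 →
      ∀ i : Fin n, 0 ≤ d i * (1 - W i i) := by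
    intro W hW i
    exact mul_nonneg (hDnn i) (by linarith [MinSetAux.diag_entry_le_one W hW i])
  have hsum_nn : ∀ W : Matrix (Fin n) (Fin n) ℝ, Wᵀ * W = 1 →
      0 ≤ ∑ i, d i * (1 - W i i) := fun W hW =>
    Finset.sum_nonneg fun i _ => hterm W hW i
  -- decomposition of an orthogonal B
  have hdecomp : ∀ B : Matrix (Fin n) (Fin n) ℝ, Bᵀ * B = 1 →
      (Uᵀ * B * V)ᵀ * (Uᵀ * B * V) = 1 ∧ B = U * (Uᵀ * B * V) * Vᵀ := by
    intro B hB
    constructor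
    · have h1 : (Uᵀ * B * V)ᵀ * (Uᵀ * B * V) = Vᵀ * (Bᵀ * (U * Uᵀ) * B) * V := by
        simp only [Matrix.transpose_mul, Matrix.transpose_transpose]
        noncomm_ring
      rw [h1, hUU, Matrix.mul_one, ← Matrix.mul_assoc, Matrix.mul_assoc Vᵀ, hB,
        Matrix.mul_one, hV]
    · have h1 : U * (Uᵀ * B * V) * Vᵀ = (U * Uᵀ) * B * (V * Vᵀ) := by noncomm_ring
      rw [h1, hUU, hVV, Matrix.one_mul, Matrix.mul_one]
  -- reindex algebra facts
  have hmul : ∀ X Y : Matrix (Fin k ⊕ Fin (n-k)) (Fin k ⊕ Fin (n-k)) ℝ,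
      (Matrix.reindex e e X) * (Matrix.reindex e e Y) = Matrix.reindex e e (X * Y) := by
    intro X Y
    simp only [Matrix.reindex_apply]
    exact Matrix.submatrix_mul_equiv X Y _ e.symm _
  have htr : ∀ X : Matrix (Fin k ⊕ Fin (n-k)) (Fin k ⊕ Fin (n-k)) ℝ,
      (Matrix.reindex e e X)ᵀ = Matrix.reindex e e Xᵀ := fun X =>
    Matrix.transpose_reindex _ _ _
  have hone : Matrix.reindex e e (1 : Matrix (Fin k ⊕ Fin (n-k)) (Fin k ⊕ Fin (n-k)) ℝ) = 1 := by
    rw [Matrix.reindex_apply, Matrix.submatrix_one_equiv]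
  -- orthogonality of U W Vᵀ
  have horthB : ∀ W : Matrix (Fin n) (Fin n) ℝ, Wᵀ * W = 1 →
      (U*W*Vᵀ)ᵀ * (U*W*Vᵀ) = 1 := by
    intro W hW
    have h1 : (U*W*Vᵀ)ᵀ * (U*W*Vᵀ) = V * (Wᵀ * (Uᵀ*U) * W) * Vᵀ := by
      simp only [Matrix.transpose_mul, Matrix.transpose_transpose]
      noncomm_ring
    rw [h1, hU, Matrix.mul_one, hW, Matrix.mul_one, hVV]
  -- the distance equals √c₀
  have hdist : distToOrth A = Real.sqrt c₀ := by
    have hmem : Real.sqrt c₀ ∈ {x : ℝ | ∃ B : Matrix (Fin n) (Fin n) ℝ,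
        Bᵀ * B = 1 ∧ x = frobNorm (A - B)} := by
      refine ⟨U * Vᵀ, ?_, ?_⟩
      · have := horthB 1 (by simp)
        simpa using this
      · have h2 := key 1 (by simp)
        simp only [Matrix.mul_one, Matrix.one_apply_eq, sub_self, mul_zero,
          Finset.sum_const_zero, add_zero] at h2
        rw [h2]
    refine le_antisymm (csInf_le ?_ hmem) (le_csInf ⟨_, hmem⟩ ?_)
    · refine ⟨0, fun x hx => ?_⟩
      obtain ⟨B, hB, rfl⟩ := hx
      exact Real.sqrt_nonneg _
    · rintro x ⟨B, hB, rfl⟩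
      obtain ⟨hWo, hBW⟩ := hdecomp B hB
      rw [hBW, key _ hWo]
      exact Real.sqrt_le_sqrt (by linarith [hsum_nn _ hWo])
  -- membership characterization
  have hchar : ∀ W : Matrix (Fin n) (Fin n) ℝ, Wᵀ * W = 1 →
      ((U * W * Vᵀ) ∈ minimizerSet A ↔ ∀ i : Fin n, (i : ℕ) < k → W i i = 1) := by
    intro W hW
    constructor
    · rintro ⟨-, hmin⟩
      rw [key W hW, hdist,
        Real.sqrt_inj (add_nonneg hc₀nn (by linarith [hsum_nn W hW])) hc₀nn] at hmin
      have hs : ∑ i, d i * (1 - W i i) = 0 := by linarith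
      intro i hik
      have h0 := (Finset.sum_eq_zero_iff_of_nonneg
        (fun i _ => hterm W hW i)).mp hs i (Finset.mem_univ i)
      have hdi : d i ≠ 0 := (hdpos i).mpr hik
      rcases mul_eq_zero.mp h0 with h' | h'
      · exact absurd h' hdi
      · linarith
    · intro hfix
      refine ⟨horthB W hW, ?_⟩
      rw [key W hW, hdist]
      have hs : ∑ i, d i * (1 - W i i) = 0 := Finset.sum_eq_zero fun i _ => by
        by_cases hik : (i:ℕ) < k
        · rw [hfix i hik]; ring
        · have hz : d i = 0 := by
            by_contra h'; exact hik ((hdpos i).mp h')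
          rw [hz]; ring
      rw [hs]; ring_nf
  -- set equality
  have hset : minimizerSet A =
      {B | ∃ C : Matrix (Fin (n - k)) (Fin (n - k)) ℝ, Cᵀ * C = 1 ∧
        B = U * (Matrix.reindex e e
              (Matrix.fromBlocks (1 : Matrix (Fin k) (Fin k) ℝ) 0 0 C)) * Vᵀ} := by
    ext B
    simp only [Set.mem_setOf_eq]
    constructor
    · intro hB
      have hBo : Bᵀ * B = 1 := hB.1
      obtain ⟨hWo, hBW⟩ := hdecomp B hBo
      set W := Uᵀ * B * V with hWdef
      have hfix : ∀ i : Fin n, (i:ℕ) < k → W i i = 1 := by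
        rw [hBW] at hB
        exact (hchar W hWo).mp hB
      have hblock := MinSetAux.orth_fix_block W hWo hfix
      set C : Matrix (Fin (n-k)) (Fin (n-k)) ℝ :=
        fun p q => W (e (Sum.inr p)) (e (Sum.inr q)) with hCdef
      have hWeq : W = Matrix.reindex e e (Matrix.fromBlocks 1 0 0 C) := by
        ext i j
        obtain ⟨x, rfl⟩ := e.surjective i
        obtain ⟨y, rfl⟩ := e.surjective j
        rw [Matrix.reindex_apply, Matrix.submatrix_apply, Equiv.symm_apply_apply,
          Equiv.symm_apply_apply]
        cases x with
        | inl p =>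
          cases y with
          | inl q =>
            rw [hblock _ _ (Or.inl (by rw [hvl]; exact p.isLt))]
            simp [Matrix.one_apply, e.injective.eq_iff]
          | inr q =>
            rw [hblock _ _ (Or.inl (by rw [hvl]; exact p.isLt))]
            have hne : e (Sum.inl p) ≠ e (Sum.inr q) := by
              simp [e.injective.ne_iff]
            simp [hne]
        | inr p =>
          cases y with
          | inl q =>
            rw [hblock _ _ (Or.inr (by rw [hvl]; exact q.isLt))]
            have hne : e (Sum.inr p) ≠ e (Sum.inl q) := by
              simp [e.injective.ne_iff]
            simp [hne]
          | inr q =>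
            simp [hCdef]; rfl
      have hCorth : Cᵀ * C = 1 := by
        have h1 : Matrix.reindex e e
            ((Matrix.fromBlocks (1 : Matrix (Fin k) (Fin k) ℝ) 0 0 C)ᵀ *
              Matrix.fromBlocks 1 0 0 C) = 1 := by
          rw [← hmul, ← htr, ← hWeq, hWo]
        have h2 := (Matrix.reindex e e).injective (h1.trans hone.symm)
        rw [Matrix.fromBlocks_transpose, Matrix.fromBlocks_multiply,
          ← Matrix.fromBlocks_one] at h2
        simp only [Matrix.transpose_one, Matrix.transpose_zero, Matrix.mul_one,
          Matrix.one_mul, Matrix.mul_zero, Matrix.zero_mul, add_zero, zero_add] at h2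
        exact ((Matrix.fromBlocks_inj.mp h2).2.2.2)
      exact ⟨C, hCorth, by rw [hBW, hWeq]⟩
    · rintro ⟨C, hC, rfl⟩
      set W := Matrix.reindex e e
        (Matrix.fromBlocks (1 : Matrix (Fin k) (Fin k) ℝ) 0 0 C) with hWdef
      have hWo : Wᵀ * W = 1 := by
        rw [hWdef, htr, hmul, Matrix.fromBlocks_transpose, Matrix.fromBlocks_multiply]
        simp only [Matrix.transpose_one, Matrix.transpose_zero, Matrix.mul_one,
          Matrix.one_mul, Matrix.mul_zero, Matrix.zero_mul, add_zero, zero_add, hC]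
        rw [Matrix.fromBlocks_one, hone]
      refine (hchar W hWo).mpr ?_
      intro i hik
      have hieq : i = e (Sum.inl ⟨(i:ℕ), hik⟩) := by
        apply Fin.ext
        rw [hvl]
      rw [hieq, hWdef, Matrix.reindex_apply, Matrix.submatrix_apply,
        Equiv.symm_apply_apply]
      simp
  -- extraction lemma
  have hconj : ∀ X : Matrix (Fin n) (Fin n) ℝ, Uᵀ * (U * X * Vᵀ) * V = X := by
    intro X
    have h1 : Uᵀ * (U * X * Vᵀ) * V = (Uᵀ*U) * X * (Vᵀ*V) := by noncomm_ring
    rw [h1, hU, hV, Matrix.one_mul, Matrix.mul_one]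
  have hextract : ∀ C : Matrix (Fin (n-k)) (Fin (n-k)) ℝ, ∀ p q,
      (Uᵀ * (U * (Matrix.reindex e e
        (Matrix.fromBlocks (1 : Matrix (Fin k) (Fin k) ℝ) 0 0 C)) * Vᵀ) * V)
        (e (Sum.inr p)) (e (Sum.inr q)) = C p q := by
    intro C p q
    rw [hconj, Matrix.reindex_apply, Matrix.submatrix_apply, Equiv.symm_apply_apply,
      Equiv.symm_apply_apply]
    rfl
  have hmemC : ∀ B : minimizerSet A, ∃ C : Matrix (Fin (n-k)) (Fin (n-k)) ℝ,
      Cᵀ * C = 1 ∧ (B : Matrix (Fin n) (Fin n) ℝ) =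
        U * (Matrix.reindex e e
          (Matrix.fromBlocks (1 : Matrix (Fin k) (Fin k) ℝ) 0 0 C)) * Vᵀ := by
    intro B
    exact (Set.ext_iff.mp hset _).mp B.2
  have hext_eq : ∀ B : minimizerSet A,
      ∀ C : Matrix (Fin (n-k)) (Fin (n-k)) ℝ,
      (B : Matrix (Fin n) (Fin n) ℝ) =
        U * (Matrix.reindex e e
          (Matrix.fromBlocks (1 : Matrix (Fin k) (Fin k) ℝ) 0 0 C)) * Vᵀ →
      (fun p q => (Uᵀ * (B : Matrix (Fin n) (Fin n) ℝ) * V)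
        (e (Sum.inr p)) (e (Sum.inr q))) = C := by
    intro B C hBeq
    funext p q
    rw [hBeq]
    exact hextract C p q
  refine ⟨hset, ⟨?_⟩⟩
  refine Homeomorph.mk (Equiv.mk
    (fun B => ⟨fun p q => (Uᵀ * (B : Matrix (Fin n) (Fin n) ℝ) * V)
        (e (Sum.inr p)) (e (Sum.inr q)), ?_⟩)
    (fun C => ⟨U * (Matrix.reindex e e
        (Matrix.fromBlocks (1 : Matrix (Fin k) (Fin k) ℝ) 0 0 C.1)) * Vᵀ, ?_⟩)
    ?_ ?_) ?_ ?_
  · obtain ⟨C, hC, hBeq⟩ := hmemC B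
    rw [hext_eq B C hBeq]
    exact hC
  · rw [hset]
    exact ⟨C.1, C.2, rfl⟩
  · intro B
    apply Subtype.ext
    obtain ⟨C, hC, hBeq⟩ := hmemC B
    show U * (Matrix.reindex e e (Matrix.fromBlocks 1 0 0
        (fun p q => (Uᵀ * (B : Matrix (Fin n) (Fin n) ℝ) * V)
          (e (Sum.inr p)) (e (Sum.inr q))))) * Vᵀ = (B : Matrix (Fin n) (Fin n) ℝ)
    rw [hext_eq B C hBeq, ← hBeq]
  · intro C
    apply Subtype.ext
    funext p q
    exact hextract C.1 p q
  · -- continuity of extraction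
    apply Continuous.subtype_mk
    have h1 : Continuous fun B : minimizerSet A =>
        Uᵀ * (B : Matrix (Fin n) (Fin n) ℝ) * V :=
      (continuous_const.matrix_mul continuous_subtype_val).matrix_mul continuous_const
    exact continuous_matrix fun p q => h1.matrix_elem _ _
  · -- continuity of reconstruction
    apply Continuous.subtype_mk
    refine (continuous_const.matrix_mul ?_).matrix_mul continuous_const
    refine continuous_matrix fun i j => ?_
    simp only [Matrix.reindex_apply, Matrix.submatrix_apply]
    cases hsi : e.symm i with
    | inl p =>
      cases hsj : e.symm j with
      | inl q => simpa using continuous_const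
      | inr q => simpa using continuous_const
    | inr p =>
      cases hsj : e.symm j with
      | inl q => simpa using continuous_const
      | inr q =>
        simp only [Matrix.fromBlocks_apply₂₂]
        exact continuous_subtype_val.matrix_elem p q
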